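/- Let A be a finite dimensional algebra over an algebraically closed field K and let T be a functorially finite torsion class in mod(A) with minimal left T-approximation sequence A →φ T₀ → T₁ → 0. Then for every nonzero module X ∈ T there is a nonzero homomorphism from some object of α(T) to X; equivalently, Hom_A(T₀/tr_{T₁}(T₀), X) ≠ 0, where tr_{T₁}(T₀) denotes the trace of T₁ in T₀ (the sum of the images of all homomorphisms T₁ → T₀). -/

import Mathlib

open CategoryTheory

section Defs

variable (K : Type) [Field K] (A : Type) [Ring A] [Algebra K A]

/-- An `A`-module is in `mod(A)` if it is finite dimensional over `K`
(via restriction of scalars along `K → A`). -/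
def modCls : Set (ModuleCat A) :=
  {M | @FiniteDimensional K (RestrictScalars K A M) _ _ (RestrictScalars.module K A M)}

variable {A}

/-- A class of modules is replete (closed under isomorphisms). -/
def IsoClosed (C : Set (ModuleCat A)) : Prop :=
  ∀ ⦃M N : ModuleCat A⦄, (M ≅ N) → M ∈ C → N ∈ C

/-- Closed under quotients. -/
def QuotClosed (C : Set (ModuleCat A)) : Prop :=
  ∀ ⦃M N : ModuleCat A⦄ (f : M ⟶ N), Function.Surjective f → M ∈ C → N ∈ C

/-- Closed under extensions. -/
def ExtClosed (C : Set (ModuleCat A)) : Prop :=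
  ∀ ⦃M E N : ModuleCat A⦄ (f : M ⟶ E) (g : E ⟶ N),
    Function.Injective f → Function.Surjective g → Function.Exact f g →
    M ∈ C → N ∈ C → E ∈ C

/-- Closed under kernels. -/
def KerClosed (C : Set (ModuleCat A)) : Prop :=
  ∀ ⦃M N : ModuleCat A⦄ (f : M ⟶ N), M ∈ C → N ∈ C →
    ModuleCat.of A ↥(LinearMap.ker f.hom) ∈ C

/-- Closed under cokernels. -/
def CokerClosed (C : Set (ModuleCat A)) : Prop :=
  ∀ ⦃M N : ModuleCat A⦄ (f : M ⟶ N), M ∈ C → N ∈ C →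
    ModuleCat.of A (N ⧸ LinearMap.range f.hom) ∈ C

variable (A)

/-- A wide subcategory of `mod(A)`: a replete class of finite dimensional modules closed
under kernels, cokernels and extensions. -/
def IsWide (C : Set (ModuleCat A)) : Prop :=
  C ⊆ modCls K A ∧ IsoClosed C ∧ KerClosed C ∧ CokerClosed C ∧ ExtClosed C

/-- A torsion class in `mod(A)`: a replete class of finite dimensional modules closed
under quotients and extensions. -/
def IsTorsionClass (C : Set (ModuleCat A)) : Prop :=
  C ⊆ modCls K A ∧ IsoClosed C ∧ QuotClosed C ∧ ExtClosed C

variable {A}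

/-- `gen C`: all quotients of finite direct sums of objects of `C`. -/
def gen (C : Set (ModuleCat A)) : Set (ModuleCat A) :=
  {X | ∃ (n : ℕ) (M : Fin n → ModuleCat A) (_ : ∀ i, M i ∈ C)
      (f : ModuleCat.of A (∀ i, M i) ⟶ X), Function.Surjective f}

/-- Modules admitting a `C`-filtration `0 = F 0 ⊆ F 1 ⊆ ⋯ ⊆ F n = X` of length exactly `n`,
with all subquotients `F (i+1) / F i` in `C`. -/
def filtLen (C : Set (ModuleCat A)) (n : ℕ) : Set (ModuleCat A) :=
  {X | ∃ F : Fin (n + 1) → Submodule A X,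
      Monotone F ∧ F 0 = ⊥ ∧ F (Fin.last n) = ⊤ ∧
      ∀ i : Fin n, ModuleCat.of A
        (↥(F i.succ) ⧸ Submodule.comap (F i.succ).subtype (F i.castSucc)) ∈ C}

/-- `filt C`: all modules admitting a finite filtration with subquotients in `C`. -/
def filt (C : Set (ModuleCat A)) : Set (ModuleCat A) :=
  {X | ∃ n, X ∈ filtLen C n}

/-- `C^{⋆n}`: modules with a `C`-filtration of length at most `n`. -/
def filtAtMost (C : Set (ModuleCat A)) (n : ℕ) : Set (ModuleCat A) :=
  {X | ∃ m ≤ n, X ∈ filtLen C m}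

/-- `α(T)`: the modules `X ∈ T` such that for every map `g : Y → X` with `Y ∈ T`,
the kernel of `g` is again in `T`. -/
def alpha (T : Set (ModuleCat A)) : Set (ModuleCat A) :=
  {X | X ∈ T ∧ ∀ ⦃Y : ModuleCat A⦄ (g : Y ⟶ X), Y ∈ T →
      ModuleCat.of A ↥(LinearMap.ker g.hom) ∈ T}

/-- `g : X ⟶ C₁` is a left `C`-approximation of `X`. -/
def IsLeftApprox (C : Set (ModuleCat A)) {X C₁ : ModuleCat A} (g : X ⟶ C₁) : Prop :=
  C₁ ∈ C ∧ ∀ ⦃C' : ModuleCat A⦄ (h : X ⟶ C'), C' ∈ C → ∃ k : C₁ ⟶ C', g ≫ k = h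

/-- `g : C₂ ⟶ X` is a right `C`-approximation of `X`. -/
def IsRightApprox (C : Set (ModuleCat A)) {C₂ X : ModuleCat A} (g : C₂ ⟶ X) : Prop :=
  C₂ ∈ C ∧ ∀ ⦃C' : ModuleCat A⦄ (h : C' ⟶ X), C' ∈ C → ∃ k : C' ⟶ C₂, k ≫ g = h

/-- A left approximation is (left) minimal if every endomorphism compatible with it is an
isomorphism. -/
def IsMinimalLeftApprox (C : Set (ModuleCat A)) {X C₁ : ModuleCat A} (g : X ⟶ C₁) : Prop :=
  IsLeftApprox C g ∧ ∀ h : C₁ ⟶ C₁, g ≫ h = g → IsIso h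

variable (A)

/-- A class `C` is functorially finite in `mod(A)` if every finite dimensional module has
both a left and a right `C`-approximation. -/
def FunctFinite (C : Set (ModuleCat A)) : Prop :=
  ∀ X ∈ modCls K A, (∃ (C₁ : ModuleCat A) (g : X ⟶ C₁), IsLeftApprox C g) ∧
    (∃ (C₂ : ModuleCat A) (g : C₂ ⟶ X), IsRightApprox C g)

variable {A}

/-- `add M`: direct summands of finite direct sums of copies of `M`. -/
def addOf (M : ModuleCat A) : Set (ModuleCat A) :=
  {X | ∃ (n : ℕ) (i : X ⟶ ModuleCat.of A (Fin n → M)) (r : ModuleCat.of A (Fin n → M) ⟶ X),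
      i ≫ r = 𝟙 X}

/-- `gen M`: quotients of finite direct sums of copies of `M`. -/
def genOf (M : ModuleCat A) : Set (ModuleCat A) :=
  {X | ∃ (n : ℕ) (f : ModuleCat.of A (Fin n → M) ⟶ X), Function.Surjective f}

/-- `P` is split projective in `C`: `P ∈ C` and every epimorphism onto `P` from an
object of `C` splits. -/
def SplitProjIn (C : Set (ModuleCat A)) (P : ModuleCat A) : Prop :=
  P ∈ C ∧ ∀ ⦃M : ModuleCat A⦄ (f : M ⟶ P), M ∈ C → Function.Surjective f →
    ∃ s : P ⟶ M, s ≫ f = 𝟙 P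

end Defs

namespace NZH

variable {K : Type} [Field K] {A : Type} [Ring A] [Algebra K A]
variable {T : Set (ModuleCat A)}

/-- transfer membership along a linear equivalence of carriers -/
lemma memT_iso (hT : IsTorsionClass K A T) {M N : ModuleCat A} (e : ↥M ≃ₗ[A] ↥N)
    (hM : M ∈ T) : N ∈ T :=
  hT.2.1 (e.toModuleIso : M ≅ N) hM

lemma memT_surj (hT : IsTorsionClass K A T) {M N : ModuleCat A} (f : M ⟶ N)
    (hf : Function.Surjective f) (hM : M ∈ T) : N ∈ T :=
  hT.2.2.1 f hf hM

/-- image of a morphism out of a torsion module is torsion -/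
lemma memT_range (hT : IsTorsionClass K A T) {M N : ModuleCat A} (f : M ⟶ N)
    (hM : M ∈ T) : ModuleCat.of A ↥(LinearMap.range f.hom) ∈ T := by
  refine memT_surj hT (M := M)
    (ModuleCat.ofHom f.hom.rangeRestrict : M ⟶ ModuleCat.of A ↥(LinearMap.range f.hom)) ?_ hM
  exact f.hom.surjective_rangeRestrict

/-- extension closedness in submodule form -/
lemma memT_ext (hT : IsTorsionClass K A T) (M : ModuleCat A) (S : Submodule A ↥M)
    (hS : ModuleCat.of A ↥S ∈ T) (hQ : ModuleCat.of A (↥M ⧸ S) ∈ T) : M ∈ T := by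
  refine hT.2.2.2 (M := ModuleCat.of A ↥S) (E := M) (N := ModuleCat.of A (↥M ⧸ S))
    (ModuleCat.ofHom S.subtype) (ModuleCat.ofHom S.mkQ) S.injective_subtype (Submodule.mkQ_surjective S) ?_ hS hQ
  show Function.Exact S.subtype S.mkQ
  rw [LinearMap.exact_iff, Submodule.ker_mkQ, Submodule.range_subtype]

lemma memT_prod (hT : IsTorsionClass K A T) {M N : ModuleCat A}
    (hM : M ∈ T) (hN : N ∈ T) : ModuleCat.of A (↥M × ↥N) ∈ T := by
  refine hT.2.2.2 (M := M) (E := ModuleCat.of A (↥M × ↥N)) (N := N)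
    (ModuleCat.ofHom (LinearMap.inl A ↥M ↥N)) (ModuleCat.ofHom (LinearMap.snd A ↥M ↥N)) LinearMap.inl_injective
    (fun y => ⟨(0, y), rfl⟩) ?_ hM hN
  show Function.Exact (LinearMap.inl A ↥M ↥N) (LinearMap.snd A ↥M ↥N)
  rw [LinearMap.exact_iff, LinearMap.ker_snd, LinearMap.range_inl]

/-- a handrolled linear equivalence (Fin (n+1) → M) ≃ M × (Fin n → M) -/
def piSuccEquiv (n : ℕ) (M : Type*) [AddCommGroup M] [Module A M] :
    (Fin (n+1) → M) ≃ₗ[A] M × (Fin n → M) where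
  toFun f := (f 0, fun i => f i.succ)
  map_add' f g := rfl
  map_smul' a f := rfl
  invFun p := Fin.cons p.1 p.2
  left_inv f := by
    funext i
    exact Fin.cases rfl (fun j => Fin.cons_succ _ _ j) i
  right_inv p := by
    refine Prod.ext rfl ?_
    show (fun i => (Fin.cons p.1 p.2 : Fin (n+1) → M) i.succ) = p.2
    funext i
    exact Fin.cons_succ _ _ i

lemma memT_pow (hT : IsTorsionClass K A T) {M : ModuleCat A} (hM : M ∈ T) (n : ℕ) :
    ModuleCat.of A (Fin n → ↥M) ∈ T := by
  induction n with
  | zero =>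
    refine memT_surj hT (M := M) (N := ModuleCat.of A (Fin 0 → ↥M)) 0 ?_ hM
    intro y
    exact ⟨0, Subsingleton.elim _ _⟩
  | succ n ih =>
    refine memT_iso hT (M := ModuleCat.of A (↥M × (Fin n → ↥M))) ?_ ?_
    · exact (piSuccEquiv n ↥M).symm
    · exact memT_prod hT hM ih

end NZH

namespace NZH

section Approx

variable {K : Type} [Field K] {A : Type} [Ring A] [Algebra K A]
variable {T : Set (ModuleCat A)}
variable {T₀ T₁ : ModuleCat A} {φ : ModuleCat.of A A ⟶ T₀} {ψ : T₀ ⟶ T₁}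

/-- every element of a torsion module is hit by a map from `T₀` sending `φ 1` to it -/
lemma gen_hit (hφ : IsMinimalLeftApprox T φ) {V : ModuleCat A} (hV : V ∈ T) (y : ↥V) :
    ∃ k : T₀ ⟶ V, k (φ (1 : A)) = y := by
  obtain ⟨k, hk⟩ := hφ.1.2 (ModuleCat.ofHom (LinearMap.toSpanSingleton A ↥V y)) hV
  refine ⟨k, ?_⟩
  have h1 := congrArg (fun m : ModuleCat.of A A ⟶ V => m (1 : A)) hk
  have h2 : k (φ (1 : A)) = (φ ≫ k) (1 : A) := rfl
  rw [h2]
  exact h1.trans (one_smul A y)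

lemma nonzero_hom (hφ : IsMinimalLeftApprox T φ) {V : ModuleCat A} (hV : V ∈ T)
    (hV0 : Nontrivial ↥V) : ∃ k : ↥T₀ →ₗ[A] ↥V, k ≠ 0 := by
  obtain ⟨y, hy⟩ := exists_ne (0 : ↥V)
  obtain ⟨k, hk⟩ := gen_hit hφ hV y
  refine ⟨k.hom, fun h0 => hy ?_⟩
  rw [← hk]
  exact LinearMap.congr_fun h0 _

/-- `T₀` is split projective in `T` -/
lemma split_proj (hφ : IsMinimalLeftApprox T φ) {E_ : ModuleCat A} (hE : E_ ∈ T)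
    (π : E_ ⟶ T₀) (hs : Function.Surjective π) : ∃ s : T₀ ⟶ E_, ∀ x, π (s x) = x := by
  obtain ⟨e, he⟩ := hs (φ (1 : A))
  set φ' : ModuleCat.of A A ⟶ E_ := ModuleCat.ofHom (LinearMap.toSpanSingleton A ↥E_ e) with hφ'def
  obtain ⟨k, hk⟩ := hφ.1.2 φ' hE
  have hh : φ ≫ (k ≫ π) = φ := by
    rw [← Category.assoc, hk]
    refine ModuleCat.hom_ext (LinearMap.ext_ring ?_)
    show π (φ' (1 : A)) = φ (1 : A)
    rw [hφ'def]
    show π ((1 : A) • e) = φ (1 : A)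
    rw [one_smul, he]
  haveI := hφ.2 (k ≫ π) hh
  set σ := (asIso (k ≫ π)).toLinearEquiv with hσdef
  refine ⟨ModuleCat.ofHom (k.hom ∘ₗ (σ.symm : ↥T₀ ≃ₗ[A] ↥T₀).toLinearMap), fun x => ?_⟩
  have h1 : π (k (σ.symm x)) = σ (σ.symm x) := rfl
  show π (k (σ.symm x)) = x
  rw [h1, σ.apply_symm_apply]

/-- maps from `T₀` lift along surjections with torsion kernel -/
lemma lift_T₀ (hT : IsTorsionClass K A T) (hφ : IsMinimalLeftApprox T φ)
    {W M : ModuleCat A} (π : M ⟶ W) (hπ : Function.Surjective π)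
    (hker : ModuleCat.of A ↥(LinearMap.ker π.hom) ∈ T) (u : T₀ ⟶ W) :
    ∃ v : T₀ ⟶ M, ∀ x, π (v x) = u x := by
  set d : (↥T₀ × ↥M) →ₗ[A] ↥W :=
    u.hom ∘ₗ LinearMap.fst A ↥T₀ ↥M -
      π.hom ∘ₗ LinearMap.snd A ↥T₀ ↥M with hd
  set P : Submodule A (↥T₀ × ↥M) := LinearMap.ker d with hP
  have hmemP : ∀ z : ↥T₀ × ↥M, z ∈ P ↔ u z.1 = π z.2 := by
    intro z
    rw [hP, LinearMap.mem_ker, hd]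
    show u z.1 - π z.2 = 0 ↔ _
    rw [sub_eq_zero]
  set PO := ModuleCat.of A ↥P with hPO
  set p₁ : PO ⟶ T₀ := ModuleCat.ofHom ((LinearMap.fst A ↥T₀ ↥M) ∘ₗ P.subtype) with hp₁
  set p₂ : PO ⟶ M := ModuleCat.ofHom ((LinearMap.snd A ↥T₀ ↥M) ∘ₗ P.subtype) with hp₂
  have hrel : ∀ z : ↥P, u (P.subtype z).1 = π (P.subtype z).2 :=
    fun z => (hmemP _).mp z.2
  have hp₁s : Function.Surjective p₁ := by
    intro x
    obtain ⟨m, hm⟩ := hπ (u x)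
    exact ⟨⟨(x, m), (hmemP _).mpr hm.symm⟩, rfl⟩
  -- kernel of p₁ is isomorphic to kernel of π
  have ekp : ↥(LinearMap.ker π.hom) ≃ₗ[A] ↥(LinearMap.ker p₁.hom) :=
    { toFun := fun m => ⟨⟨(0, m.1), (hmemP _).mpr (by
        show u 0 = π m.1
        rw [map_zero]
        exact (LinearMap.mem_ker.mp m.2).symm)⟩, rfl⟩
      map_add' := fun m m' => by
        apply Subtype.ext; apply Subtype.ext
        show ((0 : ↥T₀), (m.1 + m'.1)) = ((0 : ↥T₀) + 0, m.1 + m'.1)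
        rw [add_zero]
      map_smul' := fun a m => by
        apply Subtype.ext; apply Subtype.ext
        show ((0 : ↥T₀), a • m.1) = (a • (0 : ↥T₀), a • m.1)
        rw [smul_zero]
      invFun := fun z => ⟨(P.subtype z.1).2, by
        have h0 : (P.subtype z.1).1 = 0 := z.2
        have := hrel z.1
        rw [h0, map_zero] at this
        exact LinearMap.mem_ker.mpr this.symm⟩
      left_inv := fun m => rfl
      right_inv := fun z => by
        apply Subtype.ext; apply Subtype.ext
        have h0 : (P.subtype z.1).1 = 0 := z.2
        exact Prod.ext h0.symm rfl }
  have hPOmem : PO ∈ T := by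
    refine memT_ext hT PO (LinearMap.ker p₁.hom) ?_ ?_
    · exact memT_iso hT (M := ModuleCat.of A ↥(LinearMap.ker π.hom)) ekp hker
    · refine memT_iso hT (M := T₀) ?_ hφ.1.1
      exact (LinearMap.quotKerEquivOfSurjective p₁.hom hp₁s).symm
  obtain ⟨s, hsec⟩ := split_proj hφ hPOmem p₁ hp₁s
  refine ⟨ModuleCat.ofHom (p₂.hom ∘ₗ s.hom), fun x => ?_⟩
  show π ((P.subtype (s x)).2) = u x
  rw [← hrel (s x)]
  have h3 : (P.subtype (s x)).1 = p₁ (s x) := rfl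
  rw [h3, hsec]

/-- factorization through the cokernel of φ -/
lemma factor_coker (hψ : Function.Surjective ψ) (hexact : Function.Exact φ ψ)
    {V : ModuleCat A} (u : T₀ ⟶ V) (h0 : u.hom ∘ₗ φ.hom = 0) :
    ∃ w : T₁ ⟶ V, w.hom ∘ₗ ψ.hom = u.hom := by
  have hker : LinearMap.ker ψ.hom = LinearMap.range φ.hom := (LinearMap.exact_iff (f := φ.hom) (g := ψ.hom)).mp hexact
  have hle : LinearMap.ker ψ.hom ≤ LinearMap.ker u.hom := by
    intro x hx
    rw [hker] at hx
    obtain ⟨a, rfl⟩ := hx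
    show u (φ a) = 0
    have := congrFun (congrArg DFunLike.coe h0) a
    exact this
  set e := LinearMap.quotKerEquivOfSurjective ψ.hom hψ with hedef
  refine ⟨ModuleCat.ofHom (((LinearMap.ker ψ.hom).liftQ u.hom hle) ∘ₗ
    (e.symm : ↥T₁ ≃ₗ[A] _).toLinearMap), ?_⟩
  refine LinearMap.ext fun x => ?_
  show ((LinearMap.ker ψ.hom).liftQ u.hom hle) (e.symm (ψ x)) = u x
  have hx : ψ x = e (Submodule.Quotient.mk x) := rfl
  rw [hx, e.symm_apply_apply]
  rfl

end Approx

end NZH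

namespace NZH

section Fin

variable {K : Type} [Field K] {A : Type} [Ring A] [Algebra K A]
variable {T : Set (ModuleCat A)}

/-- transfer finite-dimensionality from `RestrictScalars` to a `compHom` module structure -/
lemma findim_transfer (M : Type*) [AddCommGroup M] [Module A M]
    (h : @FiniteDimensional K (RestrictScalars K A M) _ _ (RestrictScalars.module K A M)) :
    letI : Module K M := Module.compHom M (algebraMap K A)
    FiniteDimensional K M := by
  letI : Module K (RestrictScalars K A M) := RestrictScalars.module K A M
  letI : Module K M := Module.compHom M (algebraMap K A)
  let e : RestrictScalars K A M ≃ₗ[K] M :=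
    { RestrictScalars.addEquiv K A M with
      map_smul' := fun c x => by
        show (RestrictScalars.addEquiv K A M) (c • x) = (algebraMap K A c) • _
        rw [RestrictScalars.smul_def]
        rfl }
  haveI : Module.Finite K (RestrictScalars K A M) := h
  exact Module.Finite.equiv e

/-- a torsion submodule-trace is the sup of finitely many ranges -/
lemma trace_fin (hT : IsTorsionClass K A T) (M Y : ModuleCat A) (hM : M ∈ T) (hY : Y ∈ T)
    (Ksub : Submodule A ↥Y) :
    ∃ (n : ℕ) (us : Fin n → (↥M →ₗ[A] ↥Y)), (∀ i, LinearMap.range (us i) ≤ Ksub) ∧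
      ∀ u : ↥M →ₗ[A] ↥Y, LinearMap.range u ≤ Ksub →
        LinearMap.range u ≤ ⨆ i, LinearMap.range (us i) := by
  letI : Module K ↥M := Module.compHom ↥M (algebraMap K A)
  letI : Module K ↥Y := Module.compHom ↥Y (algebraMap K A)
  haveI : SMulCommClass A K ↥Y := ⟨fun a c x => by
    show a • (algebraMap K A c) • x = (algebraMap K A c) • a • x
    rw [← mul_smul, ← mul_smul, Algebra.commutes]⟩
  haveI : IsScalarTower K A ↥M := ⟨fun c a x => by
    show (c • a) • x = (algebraMap K A c) • a • x
    rw [Algebra.smul_def, mul_smul]⟩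
  haveI : IsScalarTower K A ↥Y := ⟨fun c a x => by
    show (c • a) • x = (algebraMap K A c) • a • x
    rw [Algebra.smul_def, mul_smul]⟩
  haveI : FiniteDimensional K ↥M := findim_transfer (K := K) ↥M (hT.1 hM)
  haveI : FiniteDimensional K ↥Y := findim_transfer (K := K) ↥Y (hT.1 hY)
  haveI : FiniteDimensional K (↥M →ₗ[A] ↥Y) := by
    have hinj : Function.Injective (LinearMap.restrictScalarsₗ K A ↥M ↥Y K) :=
      LinearMap.restrictScalars_injective K
    exact FiniteDimensional.of_injective (LinearMap.restrictScalarsₗ K A ↥M ↥Y K) hinj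
  set H : Submodule K (↥M →ₗ[A] ↥Y) :=
    { carrier := {u | LinearMap.range u ≤ Ksub}
      add_mem' := by
        rintro u v hu hv y ⟨x, rfl⟩
        show u x + v x ∈ Ksub
        exact Ksub.add_mem (hu ⟨x, rfl⟩) (hv ⟨x, rfl⟩)
      zero_mem' := by
        rintro y ⟨x, rfl⟩
        show (0 : ↥Y) ∈ Ksub
        exact Ksub.zero_mem
      smul_mem' := by
        rintro c u hu y ⟨x, rfl⟩
        show (algebraMap K A c) • u x ∈ Ksub
        exact Ksub.smul_mem _ (hu ⟨x, rfl⟩) } with hH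
  obtain ⟨n, vs, hspan⟩ := Module.Finite.exists_fin (R := K) (M := ↥H)
  refine ⟨n, fun i => (vs i).1, fun i => (vs i).2, ?_⟩
  intro u hu
  have humem : (⟨u, hu⟩ : ↥H) ∈ Submodule.span K (Set.range vs) := by
    rw [hspan]; trivial
  have key : ∀ h : ↥H, h ∈ Submodule.span K (Set.range vs) →
      LinearMap.range (h.1 : ↥M →ₗ[A] ↥Y) ≤ ⨆ i, LinearMap.range ((vs i).1) := by
    intro h hh
    induction hh using Submodule.span_induction with
    | mem x hx =>
      obtain ⟨i, rfl⟩ := hx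
      exact le_iSup (fun i => LinearMap.range ((vs i).1)) i
    | zero =>
      rintro y ⟨x, rfl⟩
      show (0 : ↥Y) ∈ _
      exact Submodule.zero_mem _
    | add x y hx hy ihx ihy =>
      rintro z ⟨w, rfl⟩
      show x.1 w + y.1 w ∈ _
      exact Submodule.add_mem _ (ihx ⟨w, rfl⟩) (ihy ⟨w, rfl⟩)
    | smul c x hx ih =>
      rintro z ⟨w, rfl⟩
      show (algebraMap K A c) • x.1 w ∈ _
      exact Submodule.smul_mem _ _ (ih ⟨w, rfl⟩)
  exact key ⟨u, hu⟩ humem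

/-- the range of the canonical map out of a finite power is the sup of the ranges -/
lemma range_bigsum {Mt Yt : Type*} [AddCommGroup Mt] [Module A Mt] [AddCommGroup Yt]
    [Module A Yt] (n : ℕ) (us : Fin n → (Mt →ₗ[A] Yt)) :
    LinearMap.range (∑ i, (us i) ∘ₗ (LinearMap.proj i : (Fin n → Mt) →ₗ[A] Mt))
      = ⨆ i, LinearMap.range (us i) := by
  apply le_antisymm
  · rintro y ⟨v, rfl⟩
    rw [LinearMap.sum_apply]
    refine Submodule.sum_mem _ fun i _ => ?_
    exact le_iSup (fun i => LinearMap.range (us i)) i ⟨v i, rfl⟩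
  · refine iSup_le fun i => ?_
    rintro y ⟨x, rfl⟩
    refine ⟨Pi.single i x, ?_⟩
    rw [LinearMap.sum_apply]
    rw [Finset.sum_eq_single i]
    · simp [LinearMap.comp_apply, LinearMap.proj_apply, Pi.single_eq_same]
    · intro j _ hj
      simp [LinearMap.comp_apply, LinearMap.proj_apply, Pi.single_eq_of_ne hj]
    · intro h
      exact absurd (Finset.mem_univ i) h

lemma memT_sup_ranges (hT : IsTorsionClass K A T) (M Y : ModuleCat A) (hM : M ∈ T)
    (n : ℕ) (us : Fin n → (↥M →ₗ[A] ↥Y)) :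
    ModuleCat.of A ↥(⨆ i, LinearMap.range (us i)) ∈ T := by
  rw [← range_bigsum n us]
  exact memT_range hT (M := ModuleCat.of A (Fin n → ↥M)) (N := Y)
    (ModuleCat.ofHom (∑ i, (us i) ∘ₗ (LinearMap.proj i : (Fin n → ↥M) →ₗ[A] ↥M))) (memT_pow hT hM n)

end Fin

end NZH

namespace NZH

section BB

variable {K : Type} [Field K] {A : Type} [Ring A] [Algebra K A]
variable {T : Set (ModuleCat A)}
variable {T₀ T₁ : ModuleCat A} {φ : ModuleCat.of A A ⟶ T₀} {ψ : T₀ ⟶ T₁}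

/-- the trace of `T₁` in `T₀` -/
def tee (T₀ T₁ : ModuleCat A) : Submodule A ↥T₀ := ⨆ g : T₁ ⟶ T₀, LinearMap.range g.hom

/-- the module `B = T₀ / tr_{T₁} T₀` -/
def BO (T₀ T₁ : ModuleCat A) : ModuleCat A := ModuleCat.of A (↥T₀ ⧸ tee T₀ T₁)

/-- the projection onto `B` -/
def qB (T₀ T₁ : ModuleCat A) : T₀ ⟶ BO T₀ T₁ := ModuleCat.ofHom (tee T₀ T₁).mkQ

lemma qB_surj : Function.Surjective (qB T₀ T₁) := Submodule.mkQ_surjective _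

lemma memT_T₁ (hT : IsTorsionClass K A T) (hφ : IsMinimalLeftApprox T φ)
    (hψ : Function.Surjective ψ) : T₁ ∈ T :=
  memT_surj hT ψ hψ hφ.1.1

lemma memT_tee (hT : IsTorsionClass K A T) (hφ : IsMinimalLeftApprox T φ)
    (hψ : Function.Surjective ψ) : ModuleCat.of A ↥(tee T₀ T₁) ∈ T := by
  obtain ⟨n, us, -, hall⟩ := trace_fin hT T₁ T₀ (memT_T₁ hT hφ hψ) hφ.1.1
    (⊤ : Submodule A ↥T₀)
  have he : tee T₀ T₁ = ⨆ i, LinearMap.range (us i) := by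
    apply le_antisymm
    · exact iSup_le fun g => hall g.hom le_top
    · exact iSup_le fun i => le_iSup (fun g : T₁ ⟶ T₀ => LinearMap.range g.hom) (ModuleCat.ofHom (us i))
  rw [he]
  exact memT_sup_ranges hT T₁ T₀ (memT_T₁ hT hφ hψ) n us

lemma memT_BO (hT : IsTorsionClass K A T) (hφ : IsMinimalLeftApprox T φ) :
    BO T₀ T₁ ∈ T :=
  memT_surj hT (qB T₀ T₁) qB_surj hφ.1.1

lemma memT_ker_qB (hT : IsTorsionClass K A T) (hφ : IsMinimalLeftApprox T φ)
    (hψ : Function.Surjective ψ) :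
    ModuleCat.of A ↥(LinearMap.ker (qB T₀ T₁).hom) ∈ T := by
  have h : LinearMap.ker ((tee T₀ T₁).mkQ) = tee T₀ T₁ := Submodule.ker_mkQ _
  show ModuleCat.of A ↥(LinearMap.ker ((tee T₀ T₁).mkQ)) ∈ T
  rw [h]
  exact memT_tee hT hφ hψ

/-- if `V` receives no maps from `T₁` then every map `T₀ ⟶ V` kills the trace -/
lemma kill_tee {V : ModuleCat A} (hψ : Function.Surjective ψ)
    (hypV : ∀ w : T₁ ⟶ V, w = 0) (u : T₀ ⟶ V) : tee T₀ T₁ ≤ LinearMap.ker u.hom := by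
  refine iSup_le fun g => ?_
  rintro x ⟨y, rfl⟩
  show u (g y) = 0
  have h : (ModuleCat.ofHom (u.hom ∘ₗ g.hom) : T₁ ⟶ V) = 0 := hypV _
  exact LinearMap.congr_fun (congrArg ModuleCat.Hom.hom h) y

/-- `Hom(T₁, B) = 0` -/
lemma hom_T₁_BO (hT : IsTorsionClass K A T) (hφ : IsMinimalLeftApprox T φ)
    (hψ : Function.Surjective ψ) (hexact : Function.Exact φ ψ)
    (u : T₁ ⟶ BO T₀ T₁) : u = 0 := by
  set d : (↥T₁ × ↥T₀) →ₗ[A] ↥(BO T₀ T₁) :=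
    u.hom ∘ₗ LinearMap.fst A ↥T₁ ↥T₀ -
      (qB T₀ T₁).hom ∘ₗ LinearMap.snd A ↥T₁ ↥T₀ with hd
  set P : Submodule A (↥T₁ × ↥T₀) := LinearMap.ker d with hP
  have hmemP : ∀ z : ↥T₁ × ↥T₀, z ∈ P ↔ u z.1 = qB T₀ T₁ z.2 := by
    intro z
    rw [hP, LinearMap.mem_ker, hd]
    show u z.1 - qB T₀ T₁ z.2 = 0 ↔ _
    rw [sub_eq_zero]
  set PO := ModuleCat.of A ↥P with hPO
  set p₁ : PO ⟶ T₁ := ModuleCat.ofHom ((LinearMap.fst A ↥T₁ ↥T₀) ∘ₗ P.subtype) with hp₁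
  set p₂ : PO ⟶ T₀ := ModuleCat.ofHom ((LinearMap.snd A ↥T₁ ↥T₀) ∘ₗ P.subtype) with hp₂
  have hrel : ∀ z : ↥P, u (P.subtype z).1 = qB T₀ T₁ (P.subtype z).2 :=
    fun z => (hmemP _).mp z.2
  have hp₁s : Function.Surjective p₁ := by
    intro x
    obtain ⟨m, hm⟩ := qB_surj (T₀ := T₀) (T₁ := T₁) (u x)
    exact ⟨⟨(x, m), (hmemP _).mpr hm.symm⟩, rfl⟩
  have ekp : ↥(LinearMap.ker (qB T₀ T₁).hom) ≃ₗ[A] ↥(LinearMap.ker p₁.hom) :=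
    { toFun := fun m => ⟨⟨(0, m.1), (hmemP _).mpr (by
        show u 0 = qB T₀ T₁ m.1
        rw [map_zero]
        exact (LinearMap.mem_ker.mp m.2).symm)⟩, rfl⟩
      map_add' := fun m m' => by
        apply Subtype.ext; apply Subtype.ext
        show ((0 : ↥T₁), (m.1 + m'.1)) = ((0 : ↥T₁) + 0, m.1 + m'.1)
        rw [add_zero]
      map_smul' := fun a m => by
        apply Subtype.ext; apply Subtype.ext
        show ((0 : ↥T₁), a • m.1) = (a • (0 : ↥T₁), a • m.1)
        rw [smul_zero]
      invFun := fun z => ⟨(P.subtype z.1).2, by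
        have h0 : (P.subtype z.1).1 = 0 := z.2
        have hr := hrel z.1
        rw [h0, map_zero] at hr
        exact LinearMap.mem_ker.mpr hr.symm⟩
      left_inv := fun m => rfl
      right_inv := fun z => by
        apply Subtype.ext; apply Subtype.ext
        have h0 : (P.subtype z.1).1 = 0 := z.2
        exact Prod.ext h0.symm rfl }
  have hPOmem : PO ∈ T := by
    refine memT_ext hT PO (LinearMap.ker p₁.hom) ?_ ?_
    · exact memT_iso hT (M := ModuleCat.of A ↥(LinearMap.ker (qB T₀ T₁).hom)) ekp
        (memT_ker_qB hT hφ hψ)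
    · refine memT_iso hT (M := T₁) ?_ (memT_T₁ hT hφ hψ)
      exact (LinearMap.quotKerEquivOfSurjective p₁.hom hp₁s).symm
  have hkerp₁T : ModuleCat.of A ↥(LinearMap.ker p₁.hom) ∈ T :=
    memT_iso hT (M := ModuleCat.of A ↥(LinearMap.ker (qB T₀ T₁).hom)) ekp (memT_ker_qB hT hφ hψ)
  -- lift ψ along p₁
  obtain ⟨v, hv⟩ := lift_T₀ hT hφ p₁ hp₁s hkerp₁T ψ
  -- the composite v ∘ φ lands in ker p₁
  have hmemk : ∀ a : A, v.hom (φ a) ∈ LinearMap.ker p₁.hom := by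
    intro a
    rw [LinearMap.mem_ker, hv (φ a)]
    exact hexact.apply_apply_eq_zero a
  set α' : ModuleCat.of A A ⟶ ModuleCat.of A ↥(LinearMap.ker p₁.hom) :=
    ModuleCat.ofHom (LinearMap.codRestrict (LinearMap.ker p₁.hom)
      (v.hom ∘ₗ φ.hom) hmemk) with hα'
  obtain ⟨k, hk⟩ := hφ.1.2 α' hkerp₁T
  set ψ'' : T₀ ⟶ PO := ModuleCat.ofHom (v.hom -
    (LinearMap.ker p₁.hom).subtype ∘ₗ k.hom) with hψ''
  have hψ''φ : ψ''.hom ∘ₗ φ.hom = 0 := by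
    refine LinearMap.ext fun a => ?_
    have hka : k (φ a) = α' a := LinearMap.congr_fun (congrArg ModuleCat.Hom.hom hk) a
    show v (φ a) - (LinearMap.ker p₁.hom).subtype (k (φ a)) = 0
    rw [hka]
    have h5 : (LinearMap.ker p₁.hom).subtype (α' a) = v (φ a) := rfl
    rw [h5, sub_self]
  obtain ⟨w, hw⟩ := factor_coker hψ hexact ψ'' hψ''φ
  have hp₁w : ∀ y : ↥T₁, p₁ (w y) = y := by
    intro y
    obtain ⟨x, rfl⟩ := hψ y
    have h1 : w (ψ x) = ψ'' x := congrFun (congrArg DFunLike.coe hw) x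
    rw [h1]
    show p₁ (v x - (LinearMap.ker p₁.hom).subtype (k x)) = ψ x
    rw [map_sub, hv x]
    have h2 : p₁ ((LinearMap.ker p₁.hom).subtype (k x)) = 0 := LinearMap.mem_ker.mp (k x).2
    rw [h2, sub_zero]
  -- now p₂ ∘ w : T₁ ⟶ T₀ shows u factors through the trace
  refine ModuleCat.hom_ext (LinearMap.ext fun y => ?_)
  have hrelw := hrel (w y)
  have h1 : (P.subtype (w y)).1 = p₁ (w y) := rfl
  have h2 : (P.subtype (w y)).2 = (p₂.hom ∘ₗ w.hom) y := rfl
  rw [h1, hp₁w y, h2] at hrelw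
  have hmem : (p₂.hom ∘ₗ w.hom) y ∈ tee T₀ T₁ :=
    le_iSup (fun g : T₁ ⟶ T₀ => LinearMap.range g.hom)
      (ModuleCat.ofHom (p₂.hom ∘ₗ w.hom)) ⟨y, rfl⟩
  show u y = 0
  rw [hrelw]
  exact (Submodule.Quotient.mk_eq_zero _).mpr hmem

end BB

end NZH

namespace NZH

section Star

variable {K : Type} [Field K] {A : Type} [Ring A] [Algebra K A]
variable {T : Set (ModuleCat A)}
variable {T₀ T₁ : ModuleCat A} {φ : ModuleCat.of A A ⟶ T₀} {ψ : T₀ ⟶ T₁}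

lemma unique_BO (hψ : Function.Surjective ψ) (hexact : Function.Exact φ ψ)
    {V : ModuleCat A} (hypV : ∀ w : T₁ ⟶ V, w = 0) (h : BO T₀ T₁ ⟶ V)
    (h0 : h (qB T₀ T₁ (φ (1 : A))) = 0) : h = 0 := by
  set u : T₀ ⟶ V := ModuleCat.ofHom (h.hom ∘ₗ (qB T₀ T₁).hom)
    with hu
  have hu0 : u.hom ∘ₗ φ.hom = 0 := by
    refine LinearMap.ext_ring ?_
    show h (qB T₀ T₁ (φ (1 : A))) = 0
    exact h0
  obtain ⟨w, hw⟩ := factor_coker hψ hexact u hu0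
  have hw0 : w = 0 := hypV w
  rw [hw0] at hw
  refine ModuleCat.hom_ext (LinearMap.ext fun b => ?_)
  obtain ⟨x, rfl⟩ := qB_surj (T₀ := T₀) (T₁ := T₁) b
  have : u x = 0 := (LinearMap.congr_fun hw x).symm.trans rfl
  exact this

lemma exists_fB (hφ : IsMinimalLeftApprox T φ) (hψ : Function.Surjective ψ)
    {V : ModuleCat A} (hV : V ∈ T) (hypV : ∀ w : T₁ ⟶ V, w = 0) (y : ↥V) :
    ∃ f : BO T₀ T₁ ⟶ V, f (qB T₀ T₁ (φ (1 : A))) = y := by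
  obtain ⟨k, hk⟩ := gen_hit hφ hV y
  have hle : tee T₀ T₁ ≤ LinearMap.ker k.hom := kill_tee hψ hypV k
  refine ⟨ModuleCat.ofHom ((tee T₀ T₁).liftQ k.hom hle), ?_⟩
  show ((tee T₀ T₁).liftQ k.hom hle) ((tee T₀ T₁).mkQ (φ (1 : A))) = y
  exact hk

lemma star_lemma (hT : IsTorsionClass K A T) (hφ : IsMinimalLeftApprox T φ)
    (hψ : Function.Surjective ψ) (hexact : Function.Exact φ ψ)
    {Y : ModuleCat A} (hY : Y ∈ T) (g : Y ⟶ BO T₀ T₁)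
    (hL : ∀ u : T₀ ⟶ Y, LinearMap.range u.hom ≤ LinearMap.ker g.hom → u = 0) :
    LinearMap.ker g.hom = ⊥ := by
  have hypY : ∀ w : T₁ ⟶ Y, w = 0 := by
    intro w
    have hgw : (ModuleCat.ofHom (g.hom ∘ₗ w.hom) : T₁ ⟶ BO T₀ T₁) = 0 :=
      hom_T₁_BO hT hφ hψ hexact _
    have hr : LinearMap.range (w.hom ∘ₗ ψ.hom) ≤
        LinearMap.ker g.hom := by
      rintro x ⟨z, rfl⟩
      show g (w (ψ z)) = 0
      exact LinearMap.congr_fun (congrArg ModuleCat.Hom.hom hgw) (ψ z)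
    have hw0 := hL (ModuleCat.ofHom (w.hom ∘ₗ ψ.hom)) hr
    refine ModuleCat.hom_ext (LinearMap.ext fun y => ?_)
    obtain ⟨x, rfl⟩ := hψ y
    exact LinearMap.congr_fun (congrArg ModuleCat.Hom.hom hw0) x
  rw [eq_bot_iff]
  intro l hl
  obtain ⟨f, hf⟩ := exists_fB hφ hψ hY hypY l
  have hgf : (ModuleCat.ofHom (g.hom ∘ₗ f.hom) :
      BO T₀ T₁ ⟶ BO T₀ T₁) = 0 := by
    refine unique_BO hψ hexact (hom_T₁_BO hT hφ hψ hexact) _ ?_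
    show g (f (qB T₀ T₁ (φ (1 : A)))) = 0
    rw [hf]
    exact hl
  have hrfq : LinearMap.range (f.hom ∘ₗ
      (qB T₀ T₁).hom) ≤ LinearMap.ker g.hom := by
    rintro x ⟨z, rfl⟩
    show g (f (qB T₀ T₁ z)) = 0
    exact LinearMap.congr_fun (congrArg ModuleCat.Hom.hom hgf) (qB T₀ T₁ z)
  have hf0 := hL _ hrfq
  have : f = 0 := by
    refine ModuleCat.hom_ext (LinearMap.ext fun b => ?_)
    obtain ⟨x, rfl⟩ := qB_surj (T₀ := T₀) (T₁ := T₁) b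
    exact LinearMap.congr_fun (congrArg ModuleCat.Hom.hom hf0) x
  rw [Submodule.mem_bot, ← hf, this]
  rfl

lemma alpha_ker (hT : IsTorsionClass K A T) (hφ : IsMinimalLeftApprox T φ)
    (hψ : Function.Surjective ψ) (hexact : Function.Exact φ ψ)
    {Y : ModuleCat A} (hY : Y ∈ T) (g : Y ⟶ BO T₀ T₁) :
    ModuleCat.of A ↥(LinearMap.ker g.hom) ∈ T := by
  obtain ⟨n, us, hle, hall⟩ := trace_fin hT T₀ Y hφ.1.1 hY (LinearMap.ker g.hom)
  set K' : Submodule A ↥Y := ⨆ i, LinearMap.range (us i) with hK'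
  have hK'T : ModuleCat.of A ↥K' ∈ T := memT_sup_ranges hT T₀ Y hφ.1.1 n us
  have hK'le : K' ≤ LinearMap.ker g.hom := iSup_le hle
  set Y' := ModuleCat.of A (↥Y ⧸ K') with hY'def
  set π : Y ⟶ Y' := ModuleCat.ofHom K'.mkQ with hπdef
  set gg : Y' ⟶ BO T₀ T₁ := ModuleCat.ofHom (K'.liftQ g.hom hK'le) with hggdef
  have hY'T : Y' ∈ T := memT_surj hT π (Submodule.mkQ_surjective _) hY
  have hLu : ∀ u : T₀ ⟶ Y', LinearMap.range u.hom ≤ LinearMap.ker gg.hom → u = 0 := by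
    intro u hu
    have hkermkQ : ModuleCat.of A ↥(LinearMap.ker π.hom) ∈ T := by
      show ModuleCat.of A ↥(LinearMap.ker (K'.mkQ)) ∈ T
      rw [Submodule.ker_mkQ]
      exact hK'T
    obtain ⟨v, hv⟩ := lift_T₀ hT hφ π (Submodule.mkQ_surjective _) hkermkQ u
    have hrange : LinearMap.range v.hom ≤ LinearMap.ker g.hom := by
      rintro x ⟨z, rfl⟩
      show g (v z) = 0
      have h1 : g (v z) = gg (π (v z)) := rfl
      rw [h1, hv z]
      exact LinearMap.mem_ker.mp (hu ⟨z, rfl⟩)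
    have h2 := hall v.hom hrange
    refine ModuleCat.hom_ext (LinearMap.ext fun x => ?_)
    rw [← hv x]
    show K'.mkQ (v x) = 0
    exact (Submodule.Quotient.mk_eq_zero _).mpr (h2 ⟨x, rfl⟩)
  have hbot := star_lemma hT hφ hψ hexact hY'T gg hLu
  have hKK : LinearMap.ker g.hom = K' := by
    refine le_antisymm ?_ hK'le
    intro l hl
    have hmem : π l ∈ LinearMap.ker gg.hom := by
      rw [LinearMap.mem_ker]
      show g l = 0
      exact hl
    rw [hbot, Submodule.mem_bot] at hmem
    exact (Submodule.Quotient.mk_eq_zero _).mp hmem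
  rw [hKK]
  exact hK'T

end Star

end NZH

namespace NZH

/-- `1 + ab` unit implies `1 + ba` unit -/
lemma isUnit_one_add_comm {E : Type*} [Ring E] {a b : E} (h : IsUnit (1 + a * b)) :
    IsUnit (1 + b * a) := by
  obtain ⟨u, hu⟩ := h
  set c : E := ↑u⁻¹ with hc
  have hc1 : (1 + a * b) * c = 1 := by rw [← hu, hc, Units.mul_inv]
  have hc2 : c * (1 + a * b) = 1 := by rw [← hu, hc, Units.inv_mul]
  refine ⟨⟨1 + b * a, 1 - b * c * a, ?_, ?_⟩, rfl⟩
  · have e1 : (1 + b * a) * (1 - b * c * a) = 1 + b * a - b * ((1 + a * b) * c) * a := by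
      noncomm_ring
    rw [hc1] at e1
    rw [e1]
    noncomm_ring
  · have e2 : (1 - b * c * a) * (1 + b * a) = 1 + b * a - b * (c * (1 + a * b)) * a := by
      noncomm_ring
    rw [hc2] at e2
    rw [e2]
    noncomm_ring

end NZH

namespace NZH

section Nil

variable {K E : Type*} [Field K] [Ring E] [Algebra K E]

lemma pow_left_stable (J : Submodule K E) (hJleft : ∀ (e : E), ∀ z ∈ J, e * z ∈ J)
    (k : ℕ) : ∀ (e : E), ∀ z ∈ J ^ (k+1), e * z ∈ J ^ (k+1) := by
  induction k with
  | zero =>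
    intro e z hz
    rw [pow_one] at hz ⊢
    exact hJleft e z hz
  | succ k ih =>
    intro e z hz
    rw [pow_succ] at hz ⊢
    refine Submodule.mul_induction_on hz (fun m hm n hn => ?_) (fun x y hx hy => ?_)
    · rw [← mul_assoc]
      exact Submodule.mul_mem_mul (ih e m hm) hn
    · rw [mul_add]
      exact Submodule.add_mem _ hx hy

lemma pow_right_stable (J : Submodule K E) (hJright : ∀ z ∈ J, ∀ (e : E), z * e ∈ J)
    (k : ℕ) : ∀ z ∈ J ^ (k+1), ∀ (e : E), z * e ∈ J ^ (k+1) := by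
  intro z hz e
  rw [pow_succ] at hz ⊢
  refine Submodule.mul_induction_on hz (fun m hm n hn => ?_) (fun x y hx hy => ?_)
  · rw [mul_assoc]
    exact Submodule.mul_mem_mul hm (hJright n hn e)
  · rw [add_mul]
    exact Submodule.add_mem _ hx hy

lemma pow_le_J (J : Submodule K E) (hJleft : ∀ (e : E), ∀ z ∈ J, e * z ∈ J) (k : ℕ) :
    J ^ (k+1) ≤ J := by
  induction k with
  | zero => rw [pow_one]
  | succ k ih =>
    rw [pow_succ]
    refine Submodule.mul_le.mpr fun m hm n hn => ?_
    exact hJleft m n hn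

lemma nilpotent_quasi_ideal [FiniteDimensional K E] (J : Submodule K E)
    (hJmem : ∀ z ∈ J, ∀ f : E, IsUnit (1 + f * z))
    (hJleft : ∀ (e : E), ∀ z ∈ J, e * z ∈ J)
    (hJright : ∀ z ∈ J, ∀ (e : E), z * e ∈ J) :
    ∃ k : ℕ, J ^ (k+1) = ⊥ := by
  classical
  -- the powers decrease
  have hanti : ∀ k : ℕ, J ^ (k+2) ≤ J ^ (k+1) := by
    intro k
    rw [pow_succ]
    refine Submodule.mul_le.mpr fun m hm n hn => ?_
    exact pow_right_stable J hJright k m hm n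
  -- stabilization
  have hstab : ∃ k : ℕ, J ^ (k+1) = J ^ (k+2) := by
    by_contra hcon
    push_neg at hcon
    have hlt : ∀ k : ℕ, Module.finrank K (J ^ (k+2) : Submodule K E) <
        Module.finrank K (J ^ (k+1) : Submodule K E) := by
      intro k
      exact Submodule.finrank_lt_finrank_of_lt (lt_of_le_of_ne (hanti k) (Ne.symm (hcon k)))
    have hdesc : ∀ k : ℕ, Module.finrank K (J ^ (k+1) : Submodule K E) + k ≤
        Module.finrank K (J ^ 1 : Submodule K E) := by
      intro k
      induction k with
      | zero => simp
      | succ k ih =>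
        have h := hlt k
        have he : Module.finrank K (J ^ (k+1+1) : Submodule K E) =
            Module.finrank K (J ^ (k+2) : Submodule K E) := rfl
        rw [he]
        omega
    have := hdesc (Module.finrank K (J ^ 1 : Submodule K E) + 1)
    omega
  obtain ⟨k₀, hk₀⟩ := hstab
  set S : Submodule K E := J ^ (k₀+1) with hSdef
  have hSleft : ∀ (e : E), ∀ z ∈ S, e * z ∈ S := pow_left_stable J hJleft k₀
  -- all higher powers equal S
  have hall : ∀ j : ℕ, J ^ (k₀+1+j) = S := by
    intro j
    induction j with
    | zero => rfl
    | succ j ih =>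
      have h1 : J ^ (k₀+1+(j+1)) = J ^ (k₀+1+j) * J := pow_succ J (k₀+1+j)
      rw [h1, ih]
      have h2 : J ^ (k₀+2) = J ^ (k₀+1) * J := pow_succ J (k₀+1)
      rw [← hSdef] at h2
      rw [← h2, ← hk₀]
  have hSS : S * S = S := by
    have h1 : J ^ (k₀+1) * J ^ (k₀+1) = J ^ (k₀+1+(k₀+1)) := (pow_add J (k₀+1) (k₀+1)).symm
    rw [hSdef]
    rw [h1]
    have : k₀+1+(k₀+1) = k₀+1+(k₀+1) := rfl
    exact hall (k₀+1)
  refine ⟨k₀, ?_⟩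
  rw [← hSdef]
  by_contra hS0
  obtain ⟨z₀, hz₀S, hz₀ne⟩ := Submodule.ne_bot_iff S |>.mp hS0
  -- the class of left ideals L with S * L ≠ 0
  set C : Set (Submodule K E) :=
    {L | (∀ (e : E), ∀ l ∈ L, e * l ∈ L) ∧ ∃ l ∈ L, ∃ z ∈ S, z * l ≠ 0} with hC
  have htop : (⊤ : Submodule K E) ∈ C := by
    refine ⟨fun e l _ => trivial, 1, trivial, z₀, hz₀S, ?_⟩
    rw [mul_one]
    exact hz₀ne
  have hex : ∃ m : ℕ, ∃ L ∈ C, Module.finrank K (L : Submodule K E) = m :=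
    ⟨Module.finrank K (⊤ : Submodule K E), ⊤, htop, rfl⟩
  set n₀ := Nat.find hex with hn₀
  obtain ⟨L, hLC, hLrank⟩ := Nat.find_spec hex
  obtain ⟨hLleft, a, haL, z, hzS, hza⟩ := hLC
  set L' : Submodule K E := S.map (LinearMap.mulRight K a) with hL'def
  have hL'le : L' ≤ L := by
    rintro _ ⟨s, hsS, rfl⟩
    show s * a ∈ L
    exact hLleft s a haL
  have hL'C : L' ∈ C := by
    constructor
    · rintro e _ ⟨s, hsS, rfl⟩
      refine ⟨e * s, hSleft e s hsS, ?_⟩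
      show (e * s) * a = e * (s * a)
      rw [mul_assoc]
    · -- use S = S * S to decompose z
      have hzSS : z ∈ S * S := by rw [hSS]; exact hzS
      have key : ∀ y ∈ S * S, y * a ≠ 0 → ∃ s ∈ S, ∃ t ∈ S, s * (t * a) ≠ 0 := by
        intro y hy
        refine Submodule.mul_induction_on hy (fun m hm n hn => ?_) (fun x y hx hy => ?_)
        · intro hne
          refine ⟨m, hm, n, hn, ?_⟩
          rw [← mul_assoc]
          exact hne
        · intro hne
          by_cases hx0 : x * a = 0
          · refine hy ?_
            intro hy0
            apply hne
            rw [add_mul, hx0, hy0, add_zero]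
          · exact hx hx0
      obtain ⟨s, hsS, t, htS, hst⟩ := key z hzSS hza
      exact ⟨t * a, ⟨t, htS, rfl⟩, s, hsS, hst⟩
  have hminle : n₀ ≤ Module.finrank K (L' : Submodule K E) :=
    Nat.find_min' hex ⟨L', hL'C, rfl⟩
  have hLL' : L' = L := by
    refine Submodule.eq_of_le_of_finrank_le hL'le ?_
    rw [hLrank]
    exact hminle
  have haL' : a ∈ L' := by rw [hLL']; exact haL
  obtain ⟨w₀, hw₀S, hw₀a⟩ := haL'
  have hw₀a' : w₀ * a = a := hw₀a
  have hw₀J : w₀ ∈ J := pow_le_J J hJleft k₀ hw₀S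
  have hunit : IsUnit (1 - w₀) := by
    have := hJmem w₀ hw₀J (-1)
    rw [neg_one_mul, ← sub_eq_add_neg] at this
    exact this
  have ha0 : a = 0 := by
    obtain ⟨u, hu⟩ := hunit
    have h1 : (1 - w₀) * a = 0 := by
      rw [sub_mul, one_mul, hw₀a', sub_self]
    have h2 : (↑u⁻¹ : E) * ((1 - w₀) * a) = a := by
      rw [← mul_assoc, ← hu, Units.inv_mul, one_mul]
    rw [h1, mul_zero] at h2
    exact h2.symm
  apply hza
  rw [ha0, mul_zero]

end Nil

end NZH

namespace NZH

section Kill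

variable {K : Type} [Field K] {A : Type} [Ring A] [Algebra K A]
variable {T : Set (ModuleCat A)}
variable {T₀ T₁ : ModuleCat A} {φ : ModuleCat.of A A ⟶ T₀} {ψ : T₀ ⟶ T₁}

lemma exists_kill (hT : IsTorsionClass K A T) (hφ : IsMinimalLeftApprox T φ)
    (hψ : Function.Surjective ψ) (hexact : Function.Exact φ ψ)
    {X : ModuleCat A} (hX : X ∈ T) (hX0 : Nontrivial ↥X) :
    ∃ w : T₀ ⟶ X, w ≠ 0 ∧ tee T₀ T₁ ≤ LinearMap.ker w.hom := by
  classical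
  letI : Module K ↥T₀ := Module.compHom ↥T₀ (algebraMap K A)
  letI : Module K ↥X := Module.compHom ↥X (algebraMap K A)
  haveI : SMulCommClass A K ↥T₀ := ⟨fun a c x => by
    show a • (algebraMap K A c) • x = (algebraMap K A c) • a • x
    rw [← mul_smul, ← mul_smul, Algebra.commutes]⟩
  haveI : SMulCommClass A K ↥X := ⟨fun a c x => by
    show a • (algebraMap K A c) • x = (algebraMap K A c) • a • x
    rw [← mul_smul, ← mul_smul, Algebra.commutes]⟩
  haveI : IsScalarTower K A ↥T₀ := ⟨fun c a x => by
    show (c • a) • x = (algebraMap K A c) • a • x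
    rw [Algebra.smul_def, mul_smul]⟩
  haveI : FiniteDimensional K ↥T₀ := findim_transfer (K := K) ↥T₀ (hT.1 hφ.1.1)
  letI : Algebra K (Module.End A ↥T₀) := Algebra.ofModule
    (fun c f g => by
      refine LinearMap.ext fun x => ?_
      rfl)
    (fun c f g => by
      refine LinearMap.ext fun x => ?_
      show f ((algebraMap K A c) • g x) = (algebraMap K A c) • f (g x)
      rw [map_smul])
  haveI : FiniteDimensional K (Module.End A ↥T₀) := by
    have hinj : Function.Injective (LinearMap.restrictScalarsₗ K A ↥T₀ ↥T₀ K) :=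
      LinearMap.restrictScalars_injective K
    exact FiniteDimensional.of_injective (LinearMap.restrictScalarsₗ K A ↥T₀ ↥T₀ K) hinj
  -- the quasi-regular radical
  set J : Submodule K (Module.End A ↥T₀) :=
    { carrier := {z | ∀ f : Module.End A ↥T₀, IsUnit (1 + f * z)}
      add_mem' := by
        intro z₁ z₂ h₁ h₂ f
        obtain ⟨u, hu⟩ := h₁ f
        have huu : (1 + f * z₁) * ↑u⁻¹ = 1 := by rw [← hu, Units.mul_inv]
        have h3 : (1 + f * z₁) * (1 + ↑u⁻¹ * (f * z₂)) =
            (1 + f * z₁) + ((1 + f * z₁) * ↑u⁻¹) * (f * z₂) := by noncomm_ring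
        have e : 1 + f * (z₁ + z₂) = (1 + f * z₁) * (1 + ↑u⁻¹ * (f * z₂)) := by
          rw [h3, huu, one_mul, mul_add, add_assoc]
        rw [e]
        refine (h₁ f).mul ?_
        have h4 := h₂ (↑u⁻¹ * f)
        rwa [mul_assoc] at h4
      zero_mem' := by
        intro f
        rw [mul_zero, add_zero]
        exact isUnit_one
      smul_mem' := by
        intro c z hz f
        have e : f * (c • z) = (c • f) * z := by
          rw [mul_smul_comm, smul_mul_assoc]
        rw [e]
        exact hz (c • f) } with hJdef
  have hJmem : ∀ z ∈ J, ∀ f : Module.End A ↥T₀, IsUnit (1 + f * z) := fun z hz => hz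
  have hJleft : ∀ (e : Module.End A ↥T₀), ∀ z ∈ J, e * z ∈ J := by
    intro e z hz f
    rw [← mul_assoc]
    exact hz (f * e)
  have hJright : ∀ z ∈ J, ∀ (e : Module.End A ↥T₀), z * e ∈ J := by
    intro z hz e f
    rw [← mul_assoc]
    refine isUnit_one_add_comm (a := e) (b := f * z) ?_
    rw [← mul_assoc]
    exact hz (e * f)
  obtain ⟨k₀, hnil⟩ := nilpotent_quasi_ideal J hJmem hJleft hJright
  -- the descending chain of hom subspaces
  set V := (↥T₀ →ₗ[A] ↥X) with hVdef
  set Vj : ℕ → Submodule K V := fun j =>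
    Submodule.span K {w : V | ∃ (v : V) (z : Module.End A ↥T₀), z ∈ J ^ j ∧ w = v ∘ₗ z}
    with hVjdef
  have hVj0 : Vj 0 ≠ ⊥ := by
    obtain ⟨v, hv⟩ := nonzero_hom hφ hX hX0
    intro hbot
    refine hv ?_
    have hvmem : v ∈ Vj 0 := by
      refine Submodule.subset_span ⟨v, 1, ?_, ?_⟩
      · rw [pow_zero]
        rw [Submodule.one_eq_span]
        exact Submodule.mem_span_singleton_self 1
      · rfl
    rw [hbot] at hvmem
    exact hvmem
  have hVjnil : Vj (k₀+1) = ⊥ := by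
    rw [eq_bot_iff]
    refine Submodule.span_le.mpr ?_
    rintro w ⟨v, z, hz, rfl⟩
    rw [hnil] at hz
    rw [Submodule.mem_bot] at hz
    rw [hz]
    rw [SetLike.mem_coe, Submodule.mem_bot]
    exact LinearMap.comp_zero v
  have hfind : ∃ j, Vj j = ⊥ := ⟨k₀+1, hVjnil⟩
  set n := Nat.find hfind with hn
  have hnpos : n ≠ 0 := by
    intro h0
    have := Nat.find_spec hfind
    rw [← hn, h0] at this
    exact hVj0 this
  obtain ⟨j, hjn⟩ : ∃ j, n = j + 1 := ⟨n - 1, (Nat.succ_pred_eq_of_pos (Nat.pos_of_ne_zero hnpos)).symm⟩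
  have hVjne : Vj j ≠ ⊥ := Nat.find_min hfind (by omega)
  have hVjsucc : Vj (j+1) = ⊥ := by
    have := Nat.find_spec hfind
    rw [← hn, hjn] at this
    exact this
  obtain ⟨w, hwmem, hwne⟩ := (Submodule.ne_bot_iff _).mp hVjne
  refine ⟨ModuleCat.ofHom w, fun h => hwne (congrArg ModuleCat.Hom.hom h), ?_⟩
  -- w kills every composite g ∘ ψ
  have hkill : ∀ g : T₁ ⟶ T₀, w ∘ₗ (g.hom ∘ₗ ψ.hom) = 0 := by
    intro g
    set c : Module.End A ↥T₀ := g.hom ∘ₗ ψ.hom with hc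
    have hcJ : c ∈ J := by
      intro f
      set h : Module.End A ↥T₀ := 1 + f * c with hh
      have hcomm : φ ≫ ModuleCat.ofHom h = φ := by
        refine ModuleCat.hom_ext (LinearMap.ext fun a => ?_)
        show h (φ a) = φ a
        rw [hh]
        show φ a + f (g (ψ (φ a))) = φ a
        rw [hexact.apply_apply_eq_zero a, map_zero, map_zero, add_zero]
      haveI := hφ.2 (ModuleCat.ofHom h) hcomm
      set σ := (asIso (ModuleCat.ofHom h)).toLinearEquiv with hσ
      refine ⟨⟨h, σ.symm.toLinearMap, ?_, ?_⟩, rfl⟩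
      · refine LinearMap.ext fun x => ?_
        show h (σ.symm x) = x
        have h1 : h (σ.symm x) = σ (σ.symm x) := rfl
        rw [h1, σ.apply_symm_apply]
      · refine LinearMap.ext fun x => ?_
        show σ.symm (h x) = x
        have h1 : h x = σ x := rfl
        rw [h1, σ.symm_apply_apply]
    -- precomposition by c maps Vj j into Vj (j+1)
    set Rc : V →ₗ[K] V :=
      { toFun := fun v => v ∘ₗ c
        map_add' := fun v₁ v₂ => LinearMap.add_comp _ _ _
        map_smul' := fun k v => LinearMap.smul_comp _ _ _ } with hRc
    have hmap : Submodule.map Rc (Vj j) ≤ Vj (j+1) := by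
      rw [hVjdef]
      rw [Submodule.map_span]
      refine Submodule.span_le.mpr ?_
      rintro _ ⟨w', ⟨v, z, hz, rfl⟩, rfl⟩
      refine Submodule.subset_span ⟨v, z * c, ?_, ?_⟩
      · rw [pow_succ]
        exact Submodule.mul_mem_mul hz hcJ
      · show (v ∘ₗ z) ∘ₗ c = v ∘ₗ (z * c)
        rfl
    have hwc : Rc w ∈ Vj (j+1) := hmap ⟨w, hwmem, rfl⟩
    rw [hVjsucc, Submodule.mem_bot] at hwc
    exact hwc
  refine iSup_le fun g => ?_
  rintro x ⟨y, rfl⟩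
  obtain ⟨x', rfl⟩ := hψ y
  rw [LinearMap.mem_ker]
  have := congrFun (congrArg DFunLike.coe (hkill g)) x'
  exact this

end Kill

end NZH

theorem nonzero_hom_from_alpha (K : Type) [Field K] [IsAlgClosed K] (A : Type) [Ring A] [Algebra K A]
    [FiniteDimensional K A]
    (T : Set (ModuleCat A))
    (hT : IsTorsionClass K A T) (hff : FunctFinite K A T)
    (T₀ T₁ : ModuleCat A) (φ : ModuleCat.of A A ⟶ T₀) (ψ : T₀ ⟶ T₁)
    (hφ : IsMinimalLeftApprox T φ) (hψ : Function.Surjective ψ)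
    (hexact : Function.Exact φ ψ)
    (X : ModuleCat A) (hX : X ∈ T) (hX0 : Nontrivial X) :
    (∃ (W : ModuleCat A) (_ : W ∈ alpha T) (f : W ⟶ X), f ≠ 0) ∧
    ∃ f : ModuleCat.of A
        (↥T₀ ⧸ (⨆ g : T₁ ⟶ T₀, LinearMap.range g.hom)) ⟶ X, f ≠ 0 := by
  obtain ⟨w, hwne, hwker⟩ := NZH.exists_kill hT hφ hψ hexact hX hX0
  set f : NZH.BO T₀ T₁ ⟶ X := ModuleCat.ofHom ((NZH.tee T₀ T₁).liftQ w.hom hwker) with hfdef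
  have hfne : f ≠ 0 := by
    intro h0
    refine hwne ?_
    refine ModuleCat.hom_ext (LinearMap.ext fun x => ?_)
    have h1 : w x = f ((NZH.tee T₀ T₁).mkQ x) := rfl
    rw [h1, h0]
    rfl
  constructor
  · refine ⟨NZH.BO T₀ T₁, ⟨NZH.memT_BO hT hφ, ?_⟩, f, hfne⟩
    intro Y g hY
    exact NZH.alpha_ker hT hφ hψ hexact hY g
  · exact ⟨f, hfne⟩
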